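/- If F is a (2,3)-spread of V(7,2), then every 5-dimensional subspace T of V(7,2) contains exactly 5 members of F. -/

import Mathlib

abbrev V72 := Fin 7 → ZMod 2

/-- `F` is a (2,3)-spread of `V(7,2)`. -/
def IsSpread23 (F : Set (Submodule (ZMod 2) V72)) : Prop :=
  (∀ S ∈ F, Module.finrank (ZMod 2) S = 3) ∧
  ∀ s : Submodule (ZMod 2) V72, Module.finrank (ZMod 2) s = 2 →
    ∃! S, S ∈ F ∧ s ≤ S

namespace Spread23Aux

open Module Submodule Finset
open scoped Classical

noncomputable def E (A : Submodule (ZMod 2) V72) : Finset V72 :=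
  Finset.univ.filter (fun v => v ∈ A)

lemma mem_E {A : Submodule (ZMod 2) V72} {v : V72} : v ∈ E A ↔ v ∈ A := by
  simp [E]

lemma E_subset {A B : Submodule (ZMod 2) V72} (h : A ≤ B) : E A ⊆ E B := by
  intro v hv; exact mem_E.2 (h (mem_E.1 hv))

lemma card_E (A : Submodule (ZMod 2) V72) :
    (E A).card = 2 ^ Module.finrank (ZMod 2) A := by
  have h1 : (E A).card = Fintype.card A := by
    rw [E, ← Fintype.card_subtype]
  rw [h1]
  have := card_eq_pow_finrank (K := ZMod 2) (V := A)
  simpa using this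

lemma zero_mem_E {A : Submodule (ZMod 2) V72} : (0 : V72) ∈ E A := mem_E.2 A.zero_mem

lemma card_E_erase (A : Submodule (ZMod 2) V72) :
    ((E A).erase 0).card = 2 ^ Module.finrank (ZMod 2) A - 1 := by
  rw [Finset.card_erase_of_mem zero_mem_E, card_E]

lemma rank2 {v w : V72} (hv : v ≠ 0) (hw : w ∉ span (ZMod 2) {v}) :
    Module.finrank (ZMod 2) (span (ZMod 2) ({v, w} : Set V72)) = 2 := by
  have hli : LinearIndependent (ZMod 2) ((↑) : ({v, w} : Set V72) → V72) :=
    linearIndepOn_id_pair hv (fun a ha => hw (ha ▸ smul_mem _ a (mem_span_singleton_self v)))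
  have hvw : v ≠ w := fun h => hw (h ▸ mem_span_singleton_self v)
  rw [finrank_span_set_eq_card hli]
  simp [Set.toFinset_insert, Set.toFinset_singleton, hvw]

lemma span_pair_le {v w : V72} {S : Submodule (ZMod 2) V72} (hv : v ∈ S) (hw : w ∈ S) :
    span (ZMod 2) ({v, w} : Set V72) ≤ S :=
  span_le.2 (by simp [Set.insert_subset_iff, hv, hw])

variable {F : Set (Submodule (ZMod 2) V72)}

noncomputable def Ffin (F : Set (Submodule (ZMod 2) V72)) :
    Finset (Submodule (ZMod 2) V72) := F.toFinite.toFinset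

lemma mem_Ffin {S : Submodule (ZMod 2) V72} : S ∈ Ffin F ↔ S ∈ F :=
  Set.Finite.mem_toFinset _

lemma partition (hF : IsSpread23 F) {v : V72} (hv : v ≠ 0)
    {W : Submodule (ZMod 2) V72} (hvW : v ∈ W) :
    E W \ E (span (ZMod 2) {v}) =
      ((Ffin F).filter (fun S => v ∈ S)).biUnion
        (fun S => E (S ⊓ W) \ E (span (ZMod 2) {v})) := by
  ext w
  simp only [Finset.mem_sdiff, mem_E, Finset.mem_biUnion, Finset.mem_filter, mem_Ffin,
    Submodule.mem_inf]
  constructor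
  · rintro ⟨hwW, hws⟩
    obtain ⟨S, ⟨hSF, hle⟩, -⟩ := hF.2 _ (rank2 hv hws)
    exact ⟨S, ⟨hSF, hle (subset_span (by simp))⟩,
      ⟨hle (subset_span (by simp)), hwW⟩, hws⟩
  · rintro ⟨S, hS, ⟨hwS, hwW⟩, hws⟩
    exact ⟨hwW, hws⟩

lemma eqn (hF : IsSpread23 F) {v : V72} (hv : v ≠ 0)
    {W : Submodule (ZMod 2) V72} (hvW : v ∈ W) :
    2 ^ Module.finrank (ZMod 2) W - 2 =
      ∑ S ∈ (Ffin F).filter (fun S => v ∈ S),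
        (2 ^ Module.finrank (ZMod 2) (S ⊓ W : Submodule (ZMod 2) V72) - 2) := by
  have hsv : Module.finrank (ZMod 2) (span (ZMod 2) ({v} : Set V72)) = 1 :=
    finrank_span_singleton hv
  have hcv : (E (span (ZMod 2) ({v} : Set V72))).card = 2 := by
    rw [card_E, hsv, pow_one]
  have hdisj : ∀ S1 ∈ (Ffin F).filter (fun S => v ∈ S),
      ∀ S2 ∈ (Ffin F).filter (fun S => v ∈ S), S1 ≠ S2 →
      Disjoint (E (S1 ⊓ W) \ E (span (ZMod 2) {v}))
        (E (S2 ⊓ W) \ E (span (ZMod 2) {v})) := by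
    intro S1 h1 S2 h2 hne
    simp only [Finset.mem_filter, mem_Ffin] at h1 h2
    rw [Finset.disjoint_left]
    intro w hw1 hw2
    simp only [Finset.mem_sdiff, mem_E, Submodule.mem_inf] at hw1 hw2
    exact hne (ExistsUnique.unique (hF.2 _ (rank2 hv hw1.2))
      ⟨h1.1, span_pair_le h1.2 hw1.1.1⟩ ⟨h2.1, span_pair_le h2.2 hw2.1.1⟩)
  have hmain := congrArg Finset.card (partition hF hv hvW)
  rw [Finset.card_biUnion hdisj] at hmain
  have hWv : E (span (ZMod 2) ({v} : Set V72)) ⊆ E W :=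
    E_subset ((span_le).2 (by simpa using hvW))
  rw [Finset.card_sdiff_of_subset hWv, hcv, card_E] at hmain
  rw [hmain]
  apply Finset.sum_congr rfl
  intro S hS
  simp only [Finset.mem_filter, mem_Ffin] at hS
  have hle : E (span (ZMod 2) ({v} : Set V72)) ⊆ E (S ⊓ W) :=
    E_subset ((span_le).2 (by simp [hS.2, hvW]))
  rw [Finset.card_sdiff_of_subset hle, hcv, card_E]

lemma finrank_V72 : Module.finrank (ZMod 2) V72 = 7 := by simp

lemma deg (hF : IsSpread23 F) {v : V72} (hv : v ≠ 0) :
    ((Ffin F).filter (fun S => v ∈ S)).card = 21 := by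
  have h := eqn hF hv (mem_top (R := ZMod 2) (x := v))
  rw [finrank_top, finrank_V72] at h
  have h2 : ∀ S ∈ (Ffin F).filter (fun S => v ∈ S),
      2 ^ Module.finrank (ZMod 2) (S ⊓ (⊤ : Submodule (ZMod 2) V72) : Submodule (ZMod 2) V72)
        - 2 = 6 := by
    intro S hS
    simp only [Finset.mem_filter, mem_Ffin] at hS
    rw [inf_top_eq, hF.1 S hS.1]
    norm_num
  rw [Finset.sum_congr rfl h2, Finset.sum_const, smul_eq_mul] at h
  omega

lemma card_V72 : Fintype.card V72 = 128 := by
  rw [Fintype.card_fun, ZMod.card, Fintype.card_fin]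
  norm_num

set_option maxRecDepth 4000 in
lemma card_Ffin (hF : IsSpread23 F) : (Ffin F).card = 381 := by
  have key : ∑ v ∈ (Finset.univ : Finset V72).erase 0,
      ((Ffin F).filter (fun S => v ∈ S)).card = 2667 := by
    rw [Finset.sum_congr rfl (fun v hv => deg hF (Finset.mem_erase.1 hv).1),
      Finset.sum_const, smul_eq_mul,
      Finset.card_erase_of_mem (Finset.mem_univ _), Finset.card_univ, card_V72]
  have swap : ∑ v ∈ (Finset.univ : Finset V72).erase 0,
      ((Ffin F).filter (fun S => v ∈ S)).card
      = ∑ S ∈ Ffin F, ((E S).erase 0).card := by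
    simp only [Finset.card_filter]
    rw [Finset.sum_comm]
    apply Finset.sum_congr rfl
    intro S hS
    rw [← Finset.card_filter]
    have hfe : ((Finset.univ : Finset V72).erase 0).filter (fun v => v ∈ S)
        = (E S).erase 0 := by
      ext v
      simp only [Finset.mem_filter, Finset.mem_erase, mem_E, Finset.mem_univ, true_and,
        and_comm]
    rw [hfe]
  have h7 : ∀ S ∈ Ffin F, ((E S).erase 0).card = 7 := by
    intro S hS
    rw [card_E_erase, hF.1 S (mem_Ffin.1 hS)]
    norm_num
  rw [swap, Finset.sum_congr rfl h7, Finset.sum_const, smul_eq_mul] at key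
  omega

end Spread23Aux

open Module Submodule Finset Spread23Aux in
theorem spread23_dim5_count (F : Set (Submodule (ZMod 2) V72)) (hF : IsSpread23 F)
    (T : Submodule (ZMod 2) V72) (hT : Module.finrank (ZMod 2) T = 5) :
    {S ∈ F | S ≤ T}.ncard = 5 := by
  classical
  have hd_ge : ∀ S ∈ Ffin F,
      1 ≤ Module.finrank (ZMod 2) (S ⊓ T : Submodule (ZMod 2) V72) := by
    intro S hS
    have h1 := Submodule.finrank_sup_add_finrank_inf_eq S T
    have h2 : Module.finrank (ZMod 2) (S ⊔ T : Submodule (ZMod 2) V72) ≤ 7 := by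
      have := Submodule.finrank_le (S ⊔ T : Submodule (ZMod 2) V72)
      rwa [finrank_V72] at this
    rw [hF.1 S (mem_Ffin.1 hS), hT] at h1
    omega
  have hd_le : ∀ S ∈ Ffin F,
      Module.finrank (ZMod 2) (S ⊓ T : Submodule (ZMod 2) V72) ≤ 3 := by
    intro S hS
    have h1 : (S ⊓ T : Submodule (ZMod 2) V72) ≤ S := inf_le_left
    have := Submodule.finrank_mono h1
    rwa [hF.1 S (mem_Ffin.1 hS)] at this
  have hd_iff : ∀ S ∈ Ffin F,
      (Module.finrank (ZMod 2) (S ⊓ T : Submodule (ZMod 2) V72) = 3 ↔ S ≤ T) := by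
    intro S hS
    constructor
    · intro h3
      have heq : (S ⊓ T : Submodule (ZMod 2) V72) = S :=
        Submodule.eq_of_le_of_finrank_le inf_le_left
          (by rw [hF.1 S (mem_Ffin.1 hS)]; exact h3.ge)
      rw [← heq]; exact inf_le_right
    · intro hle
      rw [inf_eq_left.2 hle]
      exact hF.1 S (mem_Ffin.1 hS)
  have sum930 : ∑ S ∈ Ffin F,
      (2 ^ Module.finrank (ZMod 2) (S ⊓ T : Submodule (ZMod 2) V72) - 1) *
      (2 ^ Module.finrank (ZMod 2) (S ⊓ T : Submodule (ZMod 2) V72) - 2) = 930 := by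
    have lhs : ∑ v ∈ (E T).erase 0,
        ∑ S ∈ (Ffin F).filter (fun S => v ∈ S),
          (2 ^ Module.finrank (ZMod 2) (S ⊓ T : Submodule (ZMod 2) V72) - 2) = 930 := by
      have h30 : ∀ v ∈ (E T).erase 0,
          ∑ S ∈ (Ffin F).filter (fun S => v ∈ S),
            (2 ^ Module.finrank (ZMod 2) (S ⊓ T : Submodule (ZMod 2) V72) - 2) = 30 := by
        intro v hv
        rw [Finset.mem_erase] at hv
        have := eqn hF hv.1 (mem_E.1 hv.2)
        rw [hT] at this
        simpa using this.symm
      rw [Finset.sum_congr rfl h30, Finset.sum_const, smul_eq_mul, card_E_erase, hT]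
      norm_num
    rw [← lhs]
    simp only [Finset.sum_filter]
    rw [Finset.sum_comm]
    apply Finset.sum_congr rfl
    intro S hS
    rw [← Finset.sum_filter]
    have hfe : ((E T).erase 0).filter (fun v => v ∈ S) = (E (S ⊓ T)).erase 0 := by
      ext v
      simp only [Finset.mem_filter, Finset.mem_erase, mem_E, Submodule.mem_inf]
      tauto
    rw [hfe, Finset.sum_const, smul_eq_mul, card_E_erase]
  have sum651 : ∑ S ∈ Ffin F,
      (2 ^ Module.finrank (ZMod 2) (S ⊓ T : Submodule (ZMod 2) V72) - 1) = 651 := by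
    have lhs : ∑ v ∈ (E T).erase 0,
        ((Ffin F).filter (fun S => v ∈ S)).card = 651 := by
      have h21 : ∀ v ∈ (E T).erase 0,
          ((Ffin F).filter (fun S => v ∈ S)).card = 21 := by
        intro v hv
        rw [Finset.mem_erase] at hv
        exact deg hF hv.1
      rw [Finset.sum_congr rfl h21, Finset.sum_const, smul_eq_mul, card_E_erase, hT]
      norm_num
    rw [← lhs]
    simp only [Finset.card_filter]
    rw [Finset.sum_comm]
    apply Finset.sum_congr rfl
    intro S hS
    rw [← Finset.card_filter]
    have hfe : ((E T).erase 0).filter (fun v => v ∈ S) = (E (S ⊓ T)).erase 0 := by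
      ext v
      simp only [Finset.mem_filter, Finset.mem_erase, mem_E, Submodule.mem_inf]
      tauto
    rw [hfe, card_E_erase]
  have ident : ∀ S ∈ Ffin F,
      (2 ^ Module.finrank (ZMod 2) (S ⊓ T : Submodule (ZMod 2) V72) - 1) *
      (2 ^ Module.finrank (ZMod 2) (S ⊓ T : Submodule (ZMod 2) V72) - 2) + 3 =
        3 * (2 ^ Module.finrank (ZMod 2) (S ⊓ T : Submodule (ZMod 2) V72) - 1) +
          (if S ≤ T then 24 else 0) := by
    intro S hS
    have h1 := hd_ge S hS
    have h3 := hd_le S hS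
    have hiff := hd_iff S hS
    by_cases hle : S ≤ T
    · rw [hiff.2 hle]
      simp [hle]
    · have hne : Module.finrank (ZMod 2) (S ⊓ T : Submodule (ZMod 2) V72) ≠ 3 :=
        fun h => hle (hiff.1 h)
      simp only [hle, if_false]
      set k := Module.finrank (ZMod 2) (S ⊓ T : Submodule (ZMod 2) V72) with hk
      have h2 : k ≤ 2 := by omega
      interval_cases k <;> norm_num
  have hsum := Finset.sum_congr rfl ident
  rw [Finset.sum_add_distrib, sum930, Finset.sum_const, smul_eq_mul, card_Ffin hF,
    Finset.sum_add_distrib, ← Finset.mul_sum, sum651, ← Finset.sum_filter,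
    Finset.sum_const, smul_eq_mul] at hsum
  have hcard : ((Ffin F).filter (fun S => S ≤ T)).card = 5 := by omega
  have hset : {S ∈ F | S ≤ T} = ↑((Ffin F).filter (fun S => S ≤ T)) := by
    ext S
    simp [mem_Ffin, Set.mem_setOf_eq]
  rw [hset, Set.ncard_coe_finset, hcard]
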